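/- Let ℱ ⊆ 𝒢 be sub-σ-algebras of a probability space. Let H : ℝ → ℝ ∪ {+∞} be a proper convex, lower semicontinuous, nondecreasing function with H*(1) := sup_s (s − H(s)) = 0, that is bounded from below (equivalently 0 ∈ dom H*) and satisfies 1 + ε ∈ dom H* for some ε > 0, where H*(x) := sup_s (sx − H(s)). Define U(Y) := esssup_{s ∈ L^0(ℱ)} { s − E[H(s − Y) | ℱ] }. Then for every real-valued (a.s. finite) random variable X ∈ L^0(𝒢), the nondecreasing sequence (U(X ∧ k))_{k ∈ ℕ} satisfies sup_k U(X ∧ k) < ∞ a.s.; hence the monotone extension of the optimized certainty equivalent U to L^0(𝒢) never attains the value +∞. -/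

import Mathlib

open MeasureTheory Filter
open scoped ENNReal

variable {Ω : Type*} {m0 : MeasurableSpace Ω}

/-- Conditional expectation of an extended-real-valued integrand, via monotone two-sided
truncation.  It coincides with `E[g | F]` whenever the negative part of `g` is conditionally
integrable (in particular when `g` is bounded below). -/
noncomputable def condExpEReal (μ : Measure Ω) (F : MeasurableSpace Ω) (g : Ω → EReal) :
    Ω → EReal :=
  fun ω => ⨆ k : ℕ, ⨅ j : ℕ,
    (((μ[fun ω' => (max (min (g ω') ((k : ℝ) : EReal)) (-((j : ℝ) : EReal))).toReal | F]) ω :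
      ℝ) : EReal)

/-- The Legendre transform `H*(x) = sup_s (s x − H(s))`. -/
noncomputable def legendre (H : ℝ → EReal) (x : ℝ) : EReal :=
  ⨆ s : ℝ, ((s * x : ℝ) : EReal) - H s

/-- Let `H : ℝ → ℝ ∪ {+∞}` be proper convex, lower semicontinuous,
nondecreasing, with `H*(1) = 0`, bounded from below (`0 ∈ dom H*`), and `1 + ε ∈ dom H*`
for some `ε > 0`.  Then for every a.s. finite random variable `X`, the nondecreasing
sequence `(U(X ∧ k))_k` of optimized certainty equivalents
`U(Y) = esssup_{s ∈ L⁰(ℱ)} { s − E[H(s − Y) | ℱ] }` satisfies `sup_k U(X ∧ k) < ∞` a.s.: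
there is a finite `ℱ`-measurable `B` dominating `s − E[H(s − X ∧ k) | ℱ]` a.s. for every
`k ∈ ℕ` and every `s ∈ L⁰(ℱ)`.  Hence the monotone extension of `U` to `L⁰(𝒢)` never
attains the value `+∞`.  (This covers Tail-Value-at-Risk, where `H(l) = λ⁻¹ l₊`.) -/
theorem oce_extension_never_plus_infinity
    (μ : Measure Ω) [IsProbabilityMeasure μ]
    (F G : MeasurableSpace Ω) (hFG : F ≤ G) (hG : G ≤ m0)
    (H : ℝ → EReal)
    (hproper : ∃ l, H l ≠ ⊤)
    (hlsc : LowerSemicontinuous H) (hmono : Monotone H)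
    (hconv : ∀ a b t : ℝ, t ∈ Set.Icc (0 : ℝ) 1 →
      H (t * a + (1 - t) * b) ≤ ((t : ℝ) : EReal) * H a + (((1 - t) : ℝ) : EReal) * H b)
    (hH1 : legendre H 1 = 0)
    (hlow : ∃ mlow : ℝ, ∀ l, ((mlow : ℝ) : EReal) ≤ H l)
    (hint : ∃ ε : ℝ, 0 < ε ∧ legendre H (1 + ε) ≠ ⊤)
    (X : Ω → ℝ) (hX : Measurable[G] X) :
    ∃ B : Ω → ℝ, Measurable[F] B ∧
      ∀ k : ℕ, ∀ s : Ω → ℝ, Measurable[F] s →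
        ∀ᵐ ω ∂μ,
          (s ω : EReal) -
              condExpEReal μ F (fun ω' => H (s ω' - min (X ω') (k : ℝ))) ω ≤
            (B ω : EReal) := by
  classical
  letI : MeasurableSpace Ω := m0
  obtain ⟨l₀, hl₀⟩ := hproper
  obtain ⟨mlow, hmlow⟩ := hlow
  obtain ⟨ε, hε, hCtop⟩ := hint
  have hm0F : F ≤ m0 := hFG.trans hG
  haveI : SigmaFinite (μ.trim hm0F) := inferInstance
  have hε1 : (0 : ℝ) < 1 + ε := by linarith
  set θ : ℝ := 1 / (1 + ε) with hθdef
  have hθ0 : 0 < θ := by positivity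
  have hθ1 : θ < 1 := by rw [hθdef, div_lt_one hε1]; linarith
  have hXm : Measurable[m0] X := hX.mono hG le_rfl
  have hHmeas : Measurable H := hlsc.measurable
  -- the constant `c = H*(1+ε)` is a real number
  have hl₀bot : H l₀ ≠ ⊥ := by
    intro h; have h2 := hmlow l₀; rw [h, le_bot_iff] at h2; exact EReal.coe_ne_bot _ h2
  have hCbot : legendre H (1 + ε) ≠ ⊥ := by
    intro h
    have h1 : ((l₀ * (1 + ε) : ℝ) : EReal) - H l₀ ≤ legendre H (1 + ε) :=
      le_iSup (fun t : ℝ => ((t * (1 + ε) : ℝ) : EReal) - H t) l₀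
    rw [h, le_bot_iff, ← EReal.coe_toReal hl₀ hl₀bot, ← EReal.coe_sub] at h1
    exact EReal.coe_ne_bot _ h1
  set c : ℝ := (legendre H (1 + ε)).toReal with hcdef
  have hkey : ∀ l : ℝ, ((max mlow ((1 + ε) * l - c) : ℝ) : EReal) ≤ H l := by
    intro l
    rcases eq_or_ne (H l) ⊤ with h | h
    · rw [h]; exact le_top
    have hb : H l ≠ ⊥ := by
      intro hb; have h2 := hmlow l; rw [hb, le_bot_iff] at h2; exact EReal.coe_ne_bot _ h2
    have h1 : ((l * (1 + ε) : ℝ) : EReal) - H l ≤ legendre H (1 + ε) :=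
      le_iSup (fun t : ℝ => ((t * (1 + ε) : ℝ) : EReal) - H t) l
    rw [← EReal.coe_toReal hCtop hCbot, ← EReal.coe_toReal h hb, ← EReal.coe_sub,
      EReal.coe_le_coe_iff] at h1
    have h3 : mlow ≤ (H l).toReal := by
      have h4 := hmlow l
      rw [← EReal.coe_toReal h hb, EReal.coe_le_coe_iff] at h4
      exact h4
    rw [← EReal.coe_toReal h hb, EReal.coe_le_coe_iff]
    refine max_le h3 ?_
    rw [← hcdef] at h1
    linarith
  -- conditional probabilities
  set A : ℕ → Set Ω := fun n => {ω | X ω ≤ (n : ℝ)} with hAdef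
  have hAm : ∀ n, MeasurableSet[m0] (A n) := fun n => measurableSet_le hXm measurable_const
  set ind : ℕ → Ω → ℝ := fun n => (A n).indicator (fun _ => (1 : ℝ)) with hinddef
  have hind_int : ∀ n, Integrable (ind n) μ := fun n => (integrable_const (1 : ℝ)).indicator (hAm n)
  have hind01 : ∀ n ω, 0 ≤ ind n ω ∧ ind n ω ≤ 1 := by
    intro n ω
    by_cases h : ω ∈ A n <;> simp [hinddef, Set.indicator, h]
  set p : ℕ → Ω → ℝ := fun n => μ[ind n | F] with hpdef
  have hp_meas : ∀ n, Measurable[F] (p n) := fun n => stronglyMeasurable_condExp.measurable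
  have hp_int : ∀ n, Integrable (p n) μ := fun n => integrable_condExp
  have hp_le_one : ∀ n, ∀ᵐ ω ∂μ, p n ω ≤ 1 := by
    intro n
    have h1 : μ[ind n | F] ≤ᵐ[μ] μ[(fun _ => (1 : ℝ)) | F] :=
      condExp_mono (hind_int n) (integrable_const 1) (ae_of_all _ fun ω => (hind01 n ω).2)
    have h2 : μ[(fun _ => (1 : ℝ)) | F] = fun _ => (1 : ℝ) := condExp_const hm0F 1
    filter_upwards [h1] with ω hω
    rw [h2] at hω
    exact hω
  -- a.e. there is some n with θ ≤ p n
  have hae_ex : ∀ᵐ ω ∂μ, ∃ n, θ ≤ p n ω := by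
    set bad : Set Ω := {ω | ∀ n, p n ω < θ} with hbaddef
    have hbadm : MeasurableSet[m0] bad := by
      have hb : bad = ⋂ n, {ω | p n ω < θ} := by ext ω; simp [hbaddef]
      rw [hb]
      exact MeasurableSet.iInter fun n =>
        hm0F _ (measurableSet_lt (hp_meas n) measurable_const)
    have hμ0 : μ bad = 0 := by
      set b : ℝ := (μ bad).toReal with hbdefn
      have hfb_int : Integrable (fun ω => (θ - 1) * bad.indicator (fun _ => (1 : ℝ)) ω + 1) μ :=
        ((((integrable_const (1 : ℝ)).indicator hbadm).const_mul (θ - 1)).add (integrable_const 1))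
      have hle : ∀ n, (μ (A n)).toReal ≤ (θ - 1) * b + 1 := by
        intro n
        have hmono2 : p n ≤ᵐ[μ] fun ω => (θ - 1) * bad.indicator (fun _ => (1 : ℝ)) ω + 1 := by
          filter_upwards [hp_le_one n] with ω h1
          by_cases h : ω ∈ bad
          · have h2 : p n ω < θ := h n
            simp only [Set.indicator_of_mem h]
            linarith
          · simp only [Set.indicator_of_notMem h]
            linarith
        have h3 : ∫ ω, p n ω ∂μ ≤
            ∫ ω, ((θ - 1) * bad.indicator (fun _ => (1 : ℝ)) ω + 1) ∂μ :=
          integral_mono_ae (hp_int n) hfb_int hmono2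
        have h4 : ∫ ω, p n ω ∂μ = (μ (A n)).toReal := by
          simp only [hpdef, hinddef]
          rw [integral_condExp hm0F]
          exact integral_indicator_one (hAm n)
        have h5 : ∫ ω, ((θ - 1) * bad.indicator (fun _ => (1 : ℝ)) ω + 1) ∂μ
            = (θ - 1) * b + 1 := by
          have h6 : ∫ x, bad.indicator (fun _ => (1 : ℝ)) x ∂μ = (μ bad).toReal :=
            integral_indicator_one hbadm
          rw [integral_add (((integrable_const (1 : ℝ)).indicator hbadm).const_mul (θ - 1))
            (integrable_const 1), integral_const_mul, h6, integral_const]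
          simp [hbdefn]
        rw [← h4]
        rw [h5] at h3
        exact h3
      have hlim : Tendsto (fun n => (μ (A n)).toReal) atTop (nhds 1) := by
        have hmonoA : Monotone A := by
          intro m n hmn ω hω
          have h1 : X ω ≤ (m : ℝ) := hω
          have h2 : (m : ℝ) ≤ (n : ℝ) := Nat.cast_le.mpr hmn
          exact le_trans h1 h2
        have hU : (⋃ n, A n) = Set.univ := by
          ext ω
          simp only [Set.mem_iUnion, Set.mem_univ, iff_true, hAdef, Set.mem_setOf_eq]
          exact ⟨⌈X ω⌉₊, Nat.le_ceil _⟩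
        have h1 := tendsto_measure_iUnion_atTop (μ := μ) hmonoA
        rw [hU, measure_univ] at h1
        have h2 := (ENNReal.tendsto_toReal (by norm_num : (1 : ℝ≥0∞) ≠ ⊤)).comp h1
        exact h2
      have h6 : (1 : ℝ) ≤ (θ - 1) * b + 1 := le_of_tendsto' hlim hle
      have hb0 : b ≤ 0 := by nlinarith
      have hb0' : b = 0 := le_antisymm hb0 ENNReal.toReal_nonneg
      rcases (ENNReal.toReal_eq_zero_iff _).mp hb0' with h | h
      · exact h
      · exact absurd h (measure_ne_top μ bad)
    have hae : ∀ᵐ ω ∂μ, ω ∉ bad := by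
      rw [ae_iff]
      convert hμ0 using 2
      ext ω
      simp
    filter_upwards [hae] with ω hω
    by_contra hcon
    push_neg at hcon
    exact hω fun n => hcon n
  -- the index N and the bound B
  set T : Set Ω := {ω | ∃ n, θ ≤ p n ω} with hTdef
  have hTm : MeasurableSet[F] T := by
    have h : T = ⋃ n, {ω | θ ≤ p n ω} := by ext ω; simp [hTdef]
    rw [h]
    exact MeasurableSet.iUnion fun n => measurableSet_le measurable_const (hp_meas n)
  set p' : ℕ → Ω → ℝ := fun n => T.piecewise (p n) (fun _ => θ) with hp'def
  have hex : ∀ ω, ∃ n, θ ≤ p' n ω := by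
    intro ω
    by_cases h : ω ∈ T
    · obtain ⟨n, hn⟩ := id h
      refine ⟨n, ?_⟩
      simp only [hp'def]
      rwa [Set.piecewise_eq_of_mem _ _ _ h]
    · refine ⟨0, ?_⟩
      simp only [hp'def]
      rw [Set.piecewise_eq_of_notMem _ _ _ h]
  set N : Ω → ℕ := fun ω => Nat.find (hex ω) with hNdef
  have hNm : Measurable[F] N :=
    @measurable_find Ω F (fun ω n => θ ≤ p' n ω) (fun _ _ => Classical.propDecidable _) hex
      (fun n =>
        measurableSet_le measurable_const (Measurable.piecewise hTm (hp_meas n) measurable_const))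
  have hNp : ∀ᵐ ω ∂μ, θ ≤ p (N ω) ω := by
    filter_upwards [hae_ex] with ω hω
    have h1 : θ ≤ p' (N ω) ω := Nat.find_spec (hex ω)
    have h2 : ω ∈ T := hω
    simp only [hp'def] at h1
    rwa [Set.piecewise_eq_of_mem _ _ _ h2] at h1
  refine ⟨fun ω => (N ω : ℝ) + (c + mlow) / (1 + ε) - mlow, ?_, ?_⟩
  · exact ((measurable_from_top.comp hNm).add_const _).sub_const _
  intro k s hs
  set g : Ω → EReal := fun ω' => H (s ω' - min (X ω') (k : ℝ)) with hgdef
  have hsm : Measurable[m0] s := hs.mono hm0F le_rfl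
  have hgm : Measurable[m0] g := hHmeas.comp (hsm.sub (hXm.min measurable_const))
  set a : ℕ → Ω → ℝ := fun n ω => max mlow ((1 + ε) * (s ω - n) - c) with hadef
  have ham : ∀ n, Measurable[F] (a n) := fun n =>
    measurable_const.max (((hs.sub measurable_const).const_mul _).sub_const _)
  have hamlow : ∀ n ω, mlow ≤ a n ω := fun n ω => le_max_left _ _
  have hχ : ∀ ω', ((max mlow ((1 + ε) * (s ω' - min (X ω') (k : ℝ)) - c) : ℝ) : EReal) ≤ g ω' :=
    fun ω' => hkey _
  -- the truncated integrands
  set tr : ℕ → ℕ → Ω → ℝ := fun k' j ω' =>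
    (max (min (g ω') ((k' : ℝ) : EReal)) (-((j : ℝ) : EReal))).toReal with htrdef
  have htrm : ∀ k' j, Measurable[m0] (tr k' j) := fun k' j =>
    ((hgm.min measurable_const).max measurable_const).ereal_toReal
  have hne_top : ∀ (k' j : ℕ) ω',
      max (min (g ω') ((k' : ℝ) : EReal)) (-((j : ℝ) : EReal)) ≠ ⊤ := by
    intro k' j ω'
    refine ne_of_lt (max_lt (lt_of_le_of_lt (min_le_right _ _) (EReal.coe_lt_top _)) ?_)
    rw [← EReal.coe_neg]
    exact EReal.coe_lt_top _
  have hne_bot : ∀ (k' j : ℕ) ω',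
      max (min (g ω') ((k' : ℝ) : EReal)) (-((j : ℝ) : EReal)) ≠ ⊥ := by
    intro k' j ω' hb
    have h1 : ((-(j : ℝ) : ℝ) : EReal) ≤ max (min (g ω') ((k' : ℝ) : EReal)) (-((j : ℝ) : EReal)) := by
      rw [EReal.coe_neg]; exact le_max_right _ _
    rw [hb, le_bot_iff] at h1
    exact EReal.coe_ne_bot _ h1
  have htr_ge : ∀ (k' j : ℕ) (ω' : Ω) (r : ℝ),
      ((r : ℝ) : EReal) ≤ min (g ω') ((k' : ℝ) : EReal) → r ≤ tr k' j ω' := by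
    intro k' j ω' r hr
    have hx : ((r : ℝ) : EReal) ≤ max (min (g ω') ((k' : ℝ) : EReal)) (-((j : ℝ) : EReal)) :=
      le_trans hr (le_max_left _ _)
    have h2 := EReal.toReal_le_toReal hx (EReal.coe_ne_bot r) (hne_top k' j ω')
    rwa [EReal.toReal_coe] at h2
  have htr_lb : ∀ (k' j : ℕ) ω', -(j : ℝ) ≤ tr k' j ω' := by
    intro k' j ω'
    have h1 : ((-(j : ℝ) : ℝ) : EReal) ≤ max (min (g ω') ((k' : ℝ) : EReal)) (-((j : ℝ) : EReal)) := by
      rw [EReal.coe_neg]; exact le_max_right _ _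
    have h2 := EReal.toReal_le_toReal h1 (EReal.coe_ne_bot _) (hne_top k' j ω')
    rwa [EReal.toReal_coe] at h2
  have htr_ub : ∀ (k' j : ℕ) ω', tr k' j ω' ≤ max (k' : ℝ) (-(j : ℝ)) := by
    intro k' j ω'
    have h1 : max (min (g ω') ((k' : ℝ) : EReal)) (-((j : ℝ) : EReal)) ≤
        ((max (k' : ℝ) (-(j : ℝ)) : ℝ) : EReal) := by
      rw [EReal.coe_strictMono.monotone.map_max, EReal.coe_neg]
      exact max_le_max (min_le_right _ _) le_rfl
    have h2 := EReal.toReal_le_toReal h1 (hne_bot k' j ω') (EReal.coe_ne_top _)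
    rwa [EReal.toReal_coe] at h2
  have htr_int : ∀ k' j, Integrable (tr k' j) μ := by
    intro k' j
    refine (integrable_const ((k' : ℝ) + (j : ℝ))).mono' (htrm k' j).aestronglyMeasurable ?_
    refine ae_of_all _ fun ω' => ?_
    rw [Real.norm_eq_abs, abs_le]
    have h1 := htr_lb k' j ω'
    have h2 := htr_ub k' j ω'
    have hk0 : (0 : ℝ) ≤ (k' : ℝ) := Nat.cast_nonneg _
    have hj0 : (0 : ℝ) ≤ (j : ℝ) := Nat.cast_nonneg _
    constructor
    · linarith
    · rcases max_cases (k' : ℝ) (-(j : ℝ)) with ⟨he, _⟩ | ⟨he, _⟩ <;> rw [he] at h2 <;> linarith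
  -- pointwise lower bound for the truncations
  have hpt : ∀ (n k' j : ℕ), mlow ≤ (k' : ℝ) → ∀ ω',
      mlow + min (a n ω' - mlow) ((k' : ℝ) - mlow) * ind n ω' ≤ tr k' j ω' := by
    intro n k' j hk' ω'
    have hχk : ((min (max mlow ((1 + ε) * (s ω' - min (X ω') (k : ℝ)) - c)) (k' : ℝ) : ℝ) : EReal) ≤
        min (g ω') ((k' : ℝ) : EReal) := by
      rw [EReal.coe_strictMono.monotone.map_min]
      exact min_le_min (hχ ω') le_rfl
    have h1 : min (max mlow ((1 + ε) * (s ω' - min (X ω') (k : ℝ)) - c)) (k' : ℝ) ≤ tr k' j ω' :=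
      htr_ge k' j ω' _ hχk
    by_cases h : ω' ∈ A n
    · have hXn : X ω' ≤ (n : ℝ) := h
      have hind : ind n ω' = 1 := Set.indicator_of_mem h _
      have haχ : a n ω' ≤ max mlow ((1 + ε) * (s ω' - min (X ω') (k : ℝ)) - c) := by
        refine max_le_max le_rfl ?_
        have hmin : min (X ω') (k : ℝ) ≤ (n : ℝ) := le_trans (min_le_left _ _) hXn
        nlinarith
      have h2 : mlow + min (a n ω' - mlow) ((k' : ℝ) - mlow) ≤
          min (max mlow ((1 + ε) * (s ω' - min (X ω') (k : ℝ)) - c)) (k' : ℝ) := by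
        rcases le_total (a n ω' - mlow) ((k' : ℝ) - mlow) with hh | hh
        · rw [min_eq_left hh]
          exact le_min (by linarith) (by linarith)
        · rw [min_eq_right hh]
          exact le_min (by linarith) (by linarith)
      rw [hind, mul_one]
      linarith
    · have hind : ind n ω' = 0 := Set.indicator_of_notMem h _
      rw [hind, mul_zero, add_zero]
      exact le_trans (le_min (le_max_left _ _) hk') h1
  -- integrability of the lower-bound functions
  have hind_m : ∀ n, Measurable[m0] (ind n) := fun n => measurable_const.indicator (hAm n)
  have hminbd : ∀ (n : ℕ) (k' : ℕ) ω',
      |min (a n ω' - mlow) ((k' : ℝ) - mlow)| ≤ |(k' : ℝ) - mlow| := by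
    intro n k' ω'
    have h0 : 0 ≤ a n ω' - mlow := by linarith [hamlow n ω']
    rw [abs_le]
    constructor
    · rcases le_total (a n ω' - mlow) ((k' : ℝ) - mlow) with hh | hh
      · rw [min_eq_left hh]; linarith [abs_nonneg ((k' : ℝ) - mlow)]
      · rw [min_eq_right hh]; linarith [neg_abs_le ((k' : ℝ) - mlow)]
    · exact le_trans (min_le_right _ _) (le_abs_self _)
  have hlow_int : ∀ n k' : ℕ,
      Integrable (fun ω' => mlow + min (a n ω' - mlow) ((k' : ℝ) - mlow) * ind n ω') μ := by
    intro n k'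
    have hm : Measurable[m0] (fun ω' => mlow + min (a n ω' - mlow) ((k' : ℝ) - mlow) * ind n ω') :=
      measurable_const.add
        (((((ham n).mono hm0F le_rfl).sub_const _).min measurable_const).mul (hind_m n))
    refine (integrable_const (|mlow| + |(k' : ℝ) - mlow|)).mono' hm.aestronglyMeasurable ?_
    refine ae_of_all _ fun ω' => ?_
    rw [Real.norm_eq_abs]
    have h1 := (hind01 n ω').1
    have h2 := (hind01 n ω').2
    have hmabs := hminbd n k' ω'
    have hiabs : |ind n ω'| ≤ 1 := abs_le.mpr ⟨by linarith, h2⟩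
    calc |mlow + min (a n ω' - mlow) ((k' : ℝ) - mlow) * ind n ω'|
        ≤ |mlow| + |min (a n ω' - mlow) ((k' : ℝ) - mlow) * ind n ω'| := abs_add_le _ _
      _ ≤ |mlow| + |(k' : ℝ) - mlow| := by
          rw [abs_mul]
          have := mul_le_mul hmabs hiabs (abs_nonneg _) (abs_nonneg _)
          linarith
  -- identification of the conditional expectation of the lower bound
  have hlowce : ∀ n k' : ℕ,
      μ[(fun ω' => mlow + min (a n ω' - mlow) ((k' : ℝ) - mlow) * ind n ω') | F]
        =ᵐ[μ] fun ω => mlow + min (a n ω - mlow) ((k' : ℝ) - mlow) * p n ω := by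
    intro n k'
    have hfm_sm : StronglyMeasurable[F] (fun ω => min (a n ω - mlow) ((k' : ℝ) - mlow)) :=
      (((ham n).sub_const _).min measurable_const).stronglyMeasurable
    have hfm_bd : ∀ᵐ ω ∂μ, ‖min (a n ω - mlow) ((k' : ℝ) - mlow)‖ ≤ |(k' : ℝ) - mlow| :=
      ae_of_all _ fun ω => by rw [Real.norm_eq_abs]; exact hminbd n k' ω
    have heq : (fun ω' => mlow + min (a n ω' - mlow) ((k' : ℝ) - mlow) * ind n ω')
        = (fun _ => mlow) + ((fun ω => min (a n ω - mlow) ((k' : ℝ) - mlow)) * ind n) := by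
      funext ω'; rfl
    have hfmind_int : Integrable ((fun ω => min (a n ω - mlow) ((k' : ℝ) - mlow)) * ind n) μ := by
      have hmm : Measurable[m0]
          ((fun ω => min (a n ω - mlow) ((k' : ℝ) - mlow)) * ind n) :=
        ((((ham n).mono hm0F le_rfl).sub_const _).min measurable_const).mul (hind_m n)
      refine (integrable_const (|(k' : ℝ) - mlow|)).mono' hmm.aestronglyMeasurable
        (ae_of_all _ fun ω => ?_)
      rw [Pi.mul_apply, Real.norm_eq_abs, abs_mul]
      have h2 := (hind01 n ω).2
      have h1 := (hind01 n ω).1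
      have hiabs : |ind n ω| ≤ 1 := abs_le.mpr ⟨by linarith, h2⟩
      have h3 := mul_le_mul (hminbd n k' ω) hiabs (abs_nonneg _) (abs_nonneg _)
      have h4 := abs_nonneg (min (a n ω - mlow) ((k' : ℝ) - mlow))
      nlinarith
    have h1 := condExp_add (μ := μ) (m := F) (integrable_const mlow) hfmind_int
    have h2 := condExp_stronglyMeasurable_mul_of_bound hm0F hfm_sm (hind_int n)
      (|(k' : ℝ) - mlow|) hfm_bd
    have h3 : μ[(fun _ => mlow : Ω → ℝ) | F] = fun _ => mlow := condExp_const hm0F mlow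
    rw [heq]
    filter_upwards [h1, h2] with ω e1 e2
    rw [e1]
    simp only [Pi.add_apply, Pi.mul_apply, h3, e2]
    rfl
  -- the key a.e. inequality
  have hkey_ae : ∀ᵐ ω ∂μ, ∀ (n k' j : ℕ), mlow ≤ (k' : ℝ) →
      mlow + min (a n ω - mlow) ((k' : ℝ) - mlow) * p n ω ≤ (μ[tr k' j | F]) ω := by
    rw [ae_all_iff]
    intro n
    rw [ae_all_iff]
    intro k'
    rw [ae_all_iff]
    intro j
    by_cases hk' : mlow ≤ (k' : ℝ)
    · have hm1 := condExp_mono (m := F) (hlow_int n k') (htr_int k' j) (ae_of_all _ (hpt n k' j hk'))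
      filter_upwards [hm1, hlowce n k'] with ω h1 h2
      intro _
      refine le_trans (le_of_eq ?_) h1
      exact h2.symm
    · filter_upwards with ω h
      exact absurd h hk'
  -- conclude pointwise
  filter_upwards [hkey_ae, hNp] with ω hkω hNω
  have haamlow : mlow ≤ a (N ω) ω := hamlow _ _
  set k' : ℕ := ⌈max (a (N ω) ω) mlow⌉₊ with hk'def
  have hk'a : a (N ω) ω ≤ (k' : ℝ) := le_trans (le_max_left _ _) (Nat.le_ceil _)
  have hk'm : mlow ≤ (k' : ℝ) := le_trans (le_max_right _ _) (Nat.le_ceil _)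
  have hmineq : min (a (N ω) ω - mlow) ((k' : ℝ) - mlow) = a (N ω) ω - mlow :=
    min_eq_left (by linarith)
  have hElow : ∀ j : ℕ, mlow + (a (N ω) ω - mlow) * p (N ω) ω ≤ (μ[tr k' j | F]) ω := by
    intro j
    have h := hkω (N ω) k' j hk'm
    rwa [hmineq] at h
  have hlb : ((mlow + (a (N ω) ω - mlow) * p (N ω) ω : ℝ) : EReal) ≤ condExpEReal μ F g ω := by
    simp only [condExpEReal]
    refine le_iSup_of_le k' (le_iInf fun j => ?_)
    refine EReal.coe_le_coe_iff.mpr ?_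
    have h := hElow j
    simp only [htrdef] at h
    exact h
  have h1 : (s ω : EReal) - condExpEReal μ F g ω ≤
      ((s ω : ℝ) : EReal) - ((mlow + (a (N ω) ω - mlow) * p (N ω) ω : ℝ) : EReal) :=
    EReal.sub_le_sub le_rfl hlb
  refine le_trans h1 ?_
  rw [← EReal.coe_sub, EReal.coe_le_coe_iff]
  -- the real-number estimate
  have hp' : θ ≤ p (N ω) ω := hNω
  by_cases hcase : s ω ≤ ((N ω : ℕ) : ℝ) + (c + mlow) / (1 + ε)
  · have h0 : 0 ≤ (a (N ω) ω - mlow) * p (N ω) ω :=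
      mul_nonneg (by linarith) (le_trans hθ0.le hp')
    linarith
  · push_neg at hcase
    have h4 : (c + mlow) / (1 + ε) < s ω - ((N ω : ℕ) : ℝ) := by linarith
    have h5 : c + mlow < (s ω - ((N ω : ℕ) : ℝ)) * (1 + ε) := (div_lt_iff₀ hε1).mp h4
    have h6 : (s ω - ((N ω : ℕ) : ℝ)) * (1 + ε) = (1 + ε) * (s ω - ((N ω : ℕ) : ℝ)) :=
      mul_comm _ _
    have hgt : mlow < (1 + ε) * (s ω - ((N ω : ℕ) : ℝ)) - c := by linarith
    have haaeq : a (N ω) ω = (1 + ε) * (s ω - ((N ω : ℕ) : ℝ)) - c := max_eq_right hgt.le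
    have hpos : 0 ≤ (1 + ε) * (s ω - ((N ω : ℕ) : ℝ)) - c - mlow := by linarith
    have h7 : ((1 + ε) * (s ω - ((N ω : ℕ) : ℝ)) - c - mlow) * θ ≤
        ((1 + ε) * (s ω - ((N ω : ℕ) : ℝ)) - c - mlow) * p (N ω) ω :=
      mul_le_mul_of_nonneg_left hp' hpos
    have h8 : ((1 + ε) * (s ω - ((N ω : ℕ) : ℝ)) - c - mlow) * θ =
        (s ω - ((N ω : ℕ) : ℝ)) - (c + mlow) / (1 + ε) := by
      rw [hθdef]
      field_simp
      ring
    rw [haaeq]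
    nlinarith [h7, h8]
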